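/- For integers a and b, there exists an infinite gap increasing binary word w whose subword complexity satisfies f_w(n) = an + b for all sufficiently large n if and only if a ≥ 2. -/

import Mathlib

def FactorAt (w : ℕ → Fin 2) (i : ℕ) (u : List (Fin 2)) : Prop :=
  u = (List.range u.length).map (fun k => w (i + k))

def IsFactor (w : ℕ → Fin 2) (u : List (Fin 2)) : Prop :=
  ∃ i, 1 ≤ i ∧ FactorAt w i u

noncomputable def complexity (w : ℕ → Fin 2) (n : ℕ) : ℕ :=
  Set.ncard {u : List (Fin 2) | u.length = n ∧ IsFactor w u}

def OneDistrib (w : ℕ → Fin 2) (G : ℕ → ℕ) : Prop :=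
  G 0 = 0 ∧ StrictMono G ∧ ∀ p, 1 ≤ p → (w p = 1 ↔ ∃ i, 1 ≤ i ∧ G i = p)

def gap (G : ℕ → ℕ) (i : ℕ) : ℕ := G i - G (i - 1)

def GapIncreasing (G : ℕ → ℕ) : Prop :=
  ∀ i, 1 ≤ i → gap G i < gap G (i + 1)

def RightSpecial (w : ℕ → Fin 2) (u : List (Fin 2)) : Prop :=
  IsFactor w (u ++ [0]) ∧ IsFactor w (u ++ [1])

namespace GapWord

lemma fin2_eq_zero : ∀ x : Fin 2, x ≠ 1 → x = 0 := by decide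

def win (w : ℕ → Fin 2) (s n : ℕ) : List (Fin 2) := (List.range n).map (fun k => w (s + k))

@[simp] lemma win_length (w : ℕ → Fin 2) (s n : ℕ) : (win w s n).length = n := by
  simp [win]

lemma win_getElem (w : ℕ → Fin 2) (s n k : ℕ) (hk : k < n) :
    (win w s n)[k]'(by simpa using hk) = w (s + k) := by
  simp [win]

lemma factorAt_win (w : ℕ → Fin 2) (s n : ℕ) : FactorAt w s (win w s n) := by
  show win w s n = (List.range (win w s n).length).map fun k => w (s + k)
  rw [win_length]
  rfl

lemma isFactor_win (w : ℕ → Fin 2) {s : ℕ} (hs : 1 ≤ s) (n : ℕ) :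
    IsFactor w (win w s n) := ⟨s, hs, factorAt_win w s n⟩

lemma isFactor_of (w : ℕ → Fin 2) (u : List (Fin 2)) (s : ℕ) (hs : 1 ≤ s)
    (h : ∀ k, (hk : k < u.length) → u[k] = w (s + k)) : IsFactor w u := by
  refine ⟨s, hs, ?_⟩
  unfold FactorAt
  refine List.ext_getElem (by simp) ?_
  intro k h1 h2
  simp only [List.getElem_map, List.getElem_range]
  exact h k h1

lemma eq_win_of_factor {w : ℕ → Fin 2} {u : List (Fin 2)} (h : IsFactor w u) :
    ∃ s, 1 ≤ s ∧ u = win w s u.length := by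
  obtain ⟨s, hs, hf⟩ := h
  exact ⟨s, hs, hf⟩

def Fset (w : ℕ → Fin 2) (n : ℕ) : Set (List (Fin 2)) := {u | u.length = n ∧ IsFactor w u}

lemma Fset_finite (w : ℕ → Fin 2) (n : ℕ) : (Fset w n).Finite :=
  (List.finite_length_eq (Fin 2) n).subset (fun _ hu => hu.1)

noncomputable def Ffin (w : ℕ → Fin 2) (n : ℕ) : Finset (List (Fin 2)) :=
  (Fset_finite w n).toFinset

lemma mem_Ffin {w : ℕ → Fin 2} {n : ℕ} {u : List (Fin 2)} :
    u ∈ Ffin w n ↔ u.length = n ∧ IsFactor w u := by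
  simp [Ffin, Fset]

lemma complexity_eq_card (w : ℕ → Fin 2) (n : ℕ) :
    complexity w n = (Ffin w n).card := by
  rw [complexity, ← Set.ncard_coe_finset]
  congr 1
  simp [Ffin, Fset]

open Classical in
noncomputable def extc (w : ℕ → Fin 2) (x : List (Fin 2)) : Fin 2 :=
  if h : IsFactor w x then w (h.choose + x.length) else 0

lemma ext_mem {w : ℕ → Fin 2} {n : ℕ} {x : List (Fin 2)} (hx : x ∈ Ffin w n) :
    x ++ [extc w x] ∈ Ffin w (n+1) := by
  rw [mem_Ffin] at hx ⊢
  obtain ⟨hlen, hfac⟩ := hx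
  refine ⟨by simp [hlen], ?_⟩
  unfold extc
  rw [dif_pos hfac]
  obtain ⟨h1, h2⟩ := hfac.choose_spec
  set s := hfac.choose with hsdef
  have hx : x = win w s n := by rw [← hlen]; exact h2
  have : x ++ [w (s + x.length)] = win w s (n+1) := by
    rw [hlen, hx]
    simp [win, List.range_succ]
  rw [this]
  exact isFactor_win w h1 _

lemma append_single_inj {x y : List (Fin 2)} {c d : Fin 2}
    (hl : x.length = y.length) (h : x ++ [c] = y ++ [d]) : x = y ∧ c = d := by
  obtain ⟨h1, h2⟩ := List.append_inj h hl
  exact ⟨h1, by simpa using h2⟩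

noncomputable def oc (w : ℕ → Fin 2) (x : List (Fin 2)) : Fin 2 :=
  if extc w x = 0 then 1 else 0

lemma oc_ne (w : ℕ → Fin 2) (x : List (Fin 2)) : oc w x ≠ extc w x := by
  unfold oc
  have : ∀ c : Fin 2, (if c = 0 then (1:Fin 2) else 0) ≠ c := by decide
  exact this _

lemma card_succ_ge (w : ℕ → Fin 2) (n : ℕ) (u v : List (Fin 2))
    (hu : u.length = n) (hv : v.length = n) (huv : u ≠ v)
    (hRSu : RightSpecial w u) (hRSv : RightSpecial w v) :
    complexity w n + 2 ≤ complexity w (n + 1) := by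
  classical
  have hufac : ∀ c : Fin 2, IsFactor w (u ++ [c]) := by
    intro c; fin_cases c
    · exact hRSu.1
    · exact hRSu.2
  have hvfac : ∀ c : Fin 2, IsFactor w (v ++ [c]) := by
    intro c; fin_cases c
    · exact hRSv.1
    · exact hRSv.2
  set e : List (Fin 2) → List (Fin 2) := fun x => x ++ [extc w x] with he
  have himg : (Ffin w n).image e ⊆ Ffin w (n+1) := by
    intro y hy
    obtain ⟨x, hx, rfl⟩ := Finset.mem_image.mp hy
    exact ext_mem hx
  have hinj : Set.InjOn e (Ffin w n) := by
    intro x hx y hy hxy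
    have hlx := (mem_Ffin.mp hx).1
    have hly := (mem_Ffin.mp hy).1
    exact (append_single_inj (by rw [hlx, hly]) hxy).1
  have humem : u ++ [oc w u] ∈ Ffin w (n+1) := by
    rw [mem_Ffin]; exact ⟨by simp [hu], hufac _⟩
  have hvmem : v ++ [oc w v] ∈ Ffin w (n+1) := by
    rw [mem_Ffin]; exact ⟨by simp [hv], hvfac _⟩
  have hunotin : u ++ [oc w u] ∉ (Ffin w n).image e := by
    intro hmem
    obtain ⟨x, hx, hxe⟩ := Finset.mem_image.mp hmem
    have hlx := (mem_Ffin.mp hx).1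
    obtain ⟨rfl, hc⟩ := append_single_inj (by rw [hlx, hu]) hxe
    exact oc_ne w x hc.symm
  have hvnotin : v ++ [oc w v] ∉ (Ffin w n).image e := by
    intro hmem
    obtain ⟨x, hx, hxe⟩ := Finset.mem_image.mp hmem
    have hlx := (mem_Ffin.mp hx).1
    obtain ⟨rfl, hc⟩ := append_single_inj (by rw [hlx, hv]) hxe
    exact oc_ne w x hc.symm
  have hne : u ++ [oc w u] ≠ v ++ [oc w v] := by
    intro h
    exact huv (append_single_inj (by rw [hu, hv]) h).1
  set T : Finset (List (Fin 2)) :=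
    insert (u ++ [oc w u]) (insert (v ++ [oc w v]) ((Ffin w n).image e)) with hT
  have hTsub : T ⊆ Ffin w (n+1) := by
    intro y hy
    rcases Finset.mem_insert.mp hy with rfl | hy
    · exact humem
    rcases Finset.mem_insert.mp hy with rfl | hy
    · exact hvmem
    · exact himg hy
  have hTcard : T.card = (Ffin w n).card + 2 := by
    rw [hT, Finset.card_insert_of_notMem (by
        rw [Finset.mem_insert]; push_neg; exact ⟨hne, hunotin⟩),
      Finset.card_insert_of_notMem hvnotin,
      Finset.card_image_of_injOn hinj]
  calc complexity w n + 2 = T.card := by rw [hTcard, complexity_eq_card]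
    _ ≤ (Ffin w (n+1)).card := Finset.card_le_card hTsub
    _ = complexity w (n+1) := (complexity_eq_card w (n+1)).symm

lemma getElem_rep_app (n : ℕ) (c : Fin 2) (k : ℕ) (hk : k < n + 1) :
    (List.replicate n (0:Fin 2) ++ [c])[k]'(by simp; omega) =
      if k < n then 0 else c := by
  rcases Nat.lt_or_ge k n with h | h
  · rw [List.getElem_append_left (by simpa using h)]
    simp [h]
  · have hkn : k = n := by omega
    subst hkn
    rw [List.getElem_append_right (by simp)]
    simp

lemma getElem_one_rep_app (m : ℕ) (c : Fin 2) (k : ℕ) (hk : k < m + 2) :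
    ((1 :: List.replicate m (0:Fin 2)) ++ [c])[k]'(by simp; omega) =
      if k = 0 then 1 else if k < m + 1 then 0 else c := by
  rcases Nat.eq_zero_or_pos k with rfl | hpos
  · simp
  rcases Nat.lt_or_ge k (m+1) with h | h
  · rw [List.getElem_append_left (by simp; omega)]
    rw [if_neg (by omega), if_pos h]
    obtain ⟨k', rfl⟩ : ∃ k', k = k' + 1 := ⟨k - 1, by omega⟩
    simp
  · have hkm : k = m + 1 := by omega
    subst hkm
    rw [List.getElem_append_right (by simp)]
    simp

theorem forward (w : ℕ → Fin 2) (G : ℕ → ℕ) (hOD : OneDistrib w G) (hGI : GapIncreasing G)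
    (a b : ℤ) (N : ℕ) (hN : ∀ n : ℕ, N ≤ n → (complexity w n : ℤ) = a * n + b) : 2 ≤ a := by
  obtain ⟨hG0, hGm, hGiff⟩ := hOD
  have hG_ge : ∀ i, i ≤ G i := fun i => hGm.le_apply
  have hgap_pos : ∀ i, 1 ≤ i → 1 ≤ gap G i := by
    intro i hi
    have : G (i-1) < G i := hGm (by omega)
    unfold gap; omega
  have hG_gap : ∀ i, 1 ≤ i → G i = G (i-1) + gap G i := by
    intro i hi
    have : G (i-1) < G i := hGm (by omega)
    unfold gap; omega
  have hgap_lb : ∀ j, j + 1 ≤ gap G (j + 1) := by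
    intro j
    induction j with
    | zero => exact hgap_pos 1 le_rfl
    | succ j ih =>
      have := hGI (j+1) (by omega)
      omega
  have w_one : ∀ i, 1 ≤ i → w (G i) = 1 := by
    intro i hi
    have h1 : 1 ≤ G i := le_trans hi (hG_ge i)
    exact (hGiff _ h1).mpr ⟨i, hi, rfl⟩
  have w_zero_between : ∀ t t' p, t' = t + 1 → G t < p → p < G t' → w p = 0 := by
    rintro t t' p rfl h1 h2
    have hp : 1 ≤ p := by omega
    apply fin2_eq_zero
    intro hw
    obtain ⟨i, hi1, hip⟩ := (hGiff _ hp).mp hw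
    rw [← hip] at h1 h2
    have := hGm.lt_iff_lt.mp h1
    have := hGm.lt_iff_lt.mp h2
    omega
  have hG_succ : ∀ t, G (t+1) = G t + gap G (t+1) := by
    intro t
    have h : G t < G (t+1) := hGm (by omega)
    have e : t + 1 - 1 = t := rfl
    unfold gap
    rw [e]
    omega
  -- big zero runs exist: for each L there is a window of L+1 zeros
  have zeros_run : ∀ L : ℕ, ∃ s t, 1 ≤ s ∧ G (t+1) = s + L + 1 ∧ G t < s ∧
      (∀ k', k' ≤ L → w (s + k') = 0) := by
    intro L
    have hgapL := hgap_lb (L+1)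
    have hGL := hG_succ (L+1)
    refine ⟨G (L+1+1) - L - 1, L + 1, by omega, by omega, by omega, ?_⟩
    intro k' hk'
    exact w_zero_between (L+1) (L+1+1) _ rfl (by omega) (by omega)
  -- choose n := gap G (N+2) = m+1
  have hkgap := hgap_lb (N + 1)
  obtain ⟨m, hm⟩ : ∃ m, gap G (N+1+1) = m + 1 := ⟨gap G (N+1+1) - 1, by omega⟩
  set n := m + 1 with hndef
  have hnN : N + 1 ≤ n := by omega
  -- u = 0^n right special
  have hRSu : RightSpecial w (List.replicate n (0 : Fin 2)) := by
    constructor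
    · obtain ⟨s, t, hs1, _, _, hs3⟩ := zeros_run n
      have heq : List.replicate n (0:Fin 2) ++ [0] = List.replicate (n+1) 0 :=
        List.replicate_succ'.symm
      rw [heq]
      apply isFactor_of w _ s hs1
      intro k' hk'
      simp only [List.length_replicate] at hk'
      simp only [List.getElem_replicate]
      exact (hs3 k' (by omega)).symm
    · obtain ⟨s, t, hs1, hs2, _, hs3⟩ := zeros_run m
      apply isFactor_of w _ s hs1
      intro k' hk'
      simp at hk'
      rw [getElem_rep_app n 1 k' (by omega)]
      rcases Nat.lt_or_ge k' n with h | h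
      · rw [if_pos h]
        exact (hs3 k' (by omega)).symm
      · have hkn : k' = n := by omega
        subst hkn
        rw [if_neg (by omega)]
        have hst : s + n = G (t+1) := by omega
        rw [hst, w_one _ (by omega)]
  -- v = 1 0^m right special (length n = m+1)
  have hvlen : (1 :: List.replicate m (0:Fin 2)).length = n := by simp [hndef]
  have hRSv : RightSpecial w (1 :: List.replicate m (0:Fin 2)) := by
    constructor
    · have hgm := hgap_lb (n + 1)
      have hGm1 := hG_succ (n + 1)
      apply isFactor_of w _ (G (n+1)) (by have := hG_ge (n+1); omega)
      intro k' hk'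
      simp at hk'
      rw [getElem_one_rep_app m 0 k' (by omega)]
      rcases Nat.eq_zero_or_pos k' with rfl | hpos
      · rw [if_pos rfl]
        simpa using (w_one (n+1) (by omega)).symm
      · rw [if_neg (by omega)]
        have hif : (if k' < m + 1 then (0:Fin 2) else 0) = 0 := by split <;> rfl
        rw [hif]
        exact (w_zero_between (n+1) (n+1+1) _ rfl (by omega) (by omega)).symm
    · have hGk := hG_succ (N+1)
      apply isFactor_of w _ (G (N+1)) (by have := hG_ge (N+1); omega)
      intro k' hk'
      simp at hk'
      rw [getElem_one_rep_app m 1 k' (by omega)]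
      rcases Nat.eq_zero_or_pos k' with rfl | hpos
      · rw [if_pos rfl]
        simpa using (w_one (N+1) (by omega)).symm
      · rw [if_neg (by omega)]
        rcases Nat.lt_or_ge k' (m+1) with h | h
        · rw [if_pos h]
          exact (w_zero_between (N+1) (N+1+1) _ rfl (by omega) (by omega)).symm
        · rw [if_neg (by omega)]
          have hk'm : k' = m + 1 := by omega
          subst hk'm
          have hGNeq : G (N+1) + (m+1) = G (N+1+1) := by omega
          rw [hGNeq]
          exact (w_one (N+1+1) (by omega)).symm
  have huv : List.replicate n (0:Fin 2) ≠ 1 :: List.replicate m (0:Fin 2) := by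
    intro h
    rw [hndef, List.replicate_succ] at h
    injection h with h1 _
    exact absurd h1 (by decide)
  have hcard := card_succ_ge w n _ _ (by simp) hvlen huv hRSu hRSv
  have h1 := hN n (by omega)
  have h2 := hN (n+1) (by omega)
  have hc : (complexity w n : ℤ) + 2 ≤ (complexity w (n+1) : ℤ) := by exact_mod_cast hcard
  rw [h1, h2] at hc
  push_cast at hc
  linarith


/-! ## Construction for the reverse direction -/

def gs (M r e : ℕ) : ℕ → ℕ
  | i =>
    if i ≤ r + e + 1 then (if i = 0 then 0 else M + i)
    else gs M r e (i - e - 2) + gs M r e (i - e - 2 + 1)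
  termination_by i => i
  decreasing_by all_goals omega

variable {M r e : ℕ} (hr : 1 ≤ r) (hMr : e + 1 ≤ M + r)

lemma gs_zero : gs M r e 0 = 0 := by rw [gs]; simp

lemma gs_init {i : ℕ} (h1 : 1 ≤ i) (h2 : i ≤ r + e + 1) : gs M r e i = M + i := by
  rw [gs, if_pos h2, if_neg (by omega)]

lemma gs_rec' {i : ℕ} (h : r + e + 2 ≤ i) :
    gs M r e i = gs M r e (i - e - 2) + gs M r e (i - e - 2 + 1) := by
  conv_lhs => rw [gs]
  rw [if_neg (by omega)]

include hr hMr in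
lemma gs_lt_succ : ∀ i, 1 ≤ i → gs M r e i < gs M r e (i + 1) := by
  intro i
  induction i using Nat.strong_induction_on with
  | _ i ih =>
    intro hi
    rcases le_or_gt (i+1) (r+e+1) with h | h
    · rw [gs_init hi (by omega), gs_init (by omega) h]
      omega
    · rcases eq_or_lt_of_le (Nat.succ_le_of_lt h) with h' | h'
      · -- i = r+e+1
        have hieq : i = r + e + 1 := by omega
        have h2 : gs M r e (i+1) = gs M r e (i+1-e-2) + gs M r e (i+1-e-2+1) :=
          gs_rec' (by omega)
        have e1 : i + 1 - e - 2 = r := by omega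
        rw [e1] at h2
        rw [h2, gs_init hr (by omega), gs_init (by omega) (by omega),
          gs_init (by omega) (by omega)]
        omega
      · -- i ≥ r+e+2
        have h2 : gs M r e i = gs M r e (i-e-2) + gs M r e (i-e-2+1) :=
          gs_rec' (by omega)
        have h3 : gs M r e (i+1) = gs M r e (i+1-e-2) + gs M r e (i+1-e-2+1) :=
          gs_rec' (by omega)
        have e1 : i + 1 - e - 2 = i - e - 2 + 1 := by omega
        rw [e1] at h3
        have hk1 : 1 ≤ i - e - 2 := by omega
        have ha := ih (i-e-2) (by omega) hk1
        have hb := ih (i-e-2+1) (by omega) (by omega)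
        omega

include hr hMr in
lemma gs_mono : ∀ {i j}, 1 ≤ i → i ≤ j → gs M r e i ≤ gs M r e j := by
  intro i j h1 h2
  induction j with
  | zero => omega
  | succ j ih =>
    rcases Nat.lt_or_ge i (j+1) with h | h
    · have := gs_lt_succ hr hMr j (by omega)
      have := ih (by omega)
      omega
    · have : i = j + 1 := by omega
      subst this; rfl

include hr hMr in
lemma gs_lt : ∀ {i j}, 1 ≤ i → i < j → gs M r e i < gs M r e j := by
  intro i j h1 h2
  have h3 := gs_lt_succ hr hMr i h1
  have h4 : i + 1 ≤ j := h2
  have := gs_mono hr hMr (show 1 ≤ i + 1 by omega) h4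
  omega

include hr hMr in
lemma gs_ge : ∀ i, i ≤ gs M r e i := by
  intro i
  induction i with
  | zero => omega
  | succ i ih =>
    rcases Nat.eq_zero_or_pos i with rfl | hpos
    · rw [gs_init (by omega) (by omega)]; omega
    · have := gs_lt_succ hr hMr i hpos
      omega

include hr hMr in
lemma gs_pos : ∀ i, 1 ≤ i → 1 ≤ gs M r e i := fun i hi => le_trans hi (gs_ge hr hMr i)

include hr hMr in
lemma gs_inj : ∀ {i j}, 1 ≤ i → 1 ≤ j → gs M r e i = gs M r e j → i = j := by
  intro i j hi hj h
  rcases lt_trichotomy i j with h' | h' | h'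
  · have := gs_lt hr hMr hi h'; omega
  · exact h'
  · have := gs_lt hr hMr hj h'; omega

/-- positions of ones -/
def Gs (M r e : ℕ) (i : ℕ) : ℕ := ∑ k ∈ Finset.range (i+1), gs M r e k

open Classical in
noncomputable def ws (M r e : ℕ) (p : ℕ) : Fin 2 :=
  if ∃ i, 1 ≤ i ∧ Gs M r e i = p then 1 else 0

lemma Gs_zero : Gs M r e 0 = 0 := by
  simp [Gs, gs_zero]

lemma Gs_succ (i : ℕ) : Gs M r e (i+1) = Gs M r e i + gs M r e (i+1) := by
  rw [Gs, Finset.sum_range_succ]; rfl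

include hr hMr in
lemma Gs_mono : StrictMono (Gs M r e) := by
  apply strictMono_nat_of_lt_succ
  intro i
  rw [Gs_succ]
  have := gs_pos hr hMr (i+1) (by omega)
  omega

include hr hMr in
lemma Gs_ge (i : ℕ) : i ≤ Gs M r e i := (Gs_mono hr hMr).le_apply

include hr hMr in
lemma Gs_diff (c : ℕ) : ∀ i, Gs M r e i + c ≤ Gs M r e (i + c) := by
  induction c with
  | zero => intro i; simp
  | succ c ih =>
    intro i
    have h1 := ih i
    have e1 : i + (c+1) = (i + c) + 1 := by omega
    rw [e1, Gs_succ]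
    have := gs_pos hr hMr (i+c+1) (by omega)
    omega

lemma ws_iff (p : ℕ) : ws M r e p = 1 ↔ ∃ i, 1 ≤ i ∧ Gs M r e i = p := by
  unfold ws
  by_cases h : ∃ i, 1 ≤ i ∧ Gs M r e i = p
  · rw [if_pos h]
    simpa using h
  · rw [if_neg h]
    constructor
    · intro hh; exact absurd hh (by decide)
    · intro hh; exact absurd hh h

include hr hMr in
lemma ws_G (i : ℕ) (hi : 1 ≤ i) : ws M r e (Gs M r e i) = 1 :=
  (ws_iff _).mpr ⟨i, hi, rfl⟩

include hr hMr in
lemma ws_between (t p : ℕ) (h1 : Gs M r e t < p) (h2 : p < Gs M r e (t+1)) :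
    ws M r e p = 0 := by
  apply fin2_eq_zero
  intro hw
  obtain ⟨i, hi1, hip⟩ := (ws_iff p).mp hw
  rw [← hip] at h1 h2
  have := (Gs_mono hr hMr).lt_iff_lt.mp h1
  have := (Gs_mono hr hMr).lt_iff_lt.mp h2
  omega

include hr hMr in
lemma oneDistrib_ws : OneDistrib (ws M r e) (Gs M r e) := by
  refine ⟨Gs_zero, Gs_mono hr hMr, ?_⟩
  intro p _
  exact ws_iff p

include hr hMr in
lemma gap_Gs (i : ℕ) (hi : 1 ≤ i) : gap (Gs M r e) i = gs M r e i := by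
  obtain ⟨t, rfl⟩ : ∃ t, i = t + 1 := ⟨i - 1, by omega⟩
  unfold gap
  have e1 : t + 1 - 1 = t := rfl
  rw [e1, Gs_succ]
  omega

include hr hMr in
lemma gapIncreasing_ws : GapIncreasing (Gs M r e) := by
  intro i hi
  rw [gap_Gs hr hMr i hi, gap_Gs hr hMr (i+1) (by omega)]
  exact gs_lt_succ hr hMr i hi


lemma mapRange_eq_iff {f f' : ℕ → Fin 2} {n : ℕ} :
    (List.range n).map f = (List.range n).map f' ↔ ∀ k, k < n → f k = f' k := by
  rw [List.map_inj_left]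
  constructor
  · intro h k hk; exact h k (List.mem_range.mpr hk)
  · intro h k hk; exact h k (List.mem_range.mp hk)

def onew (n a : ℕ) : List (Fin 2) := (List.range n).map (fun k => if k = a then 1 else 0)

def zw (n : ℕ) : List (Fin 2) := (List.range n).map (fun _ => 0)

def Pq (M r e n i j a : ℕ) : Prop :=
  1 ≤ i ∧ i < j ∧ a + 1 ≤ gs M r e i ∧
    Gs M r e j + a + 1 ≤ n + Gs M r e i ∧ n + Gs M r e i ≤ Gs M r e (j+1) + a

instance (M r e n i j a : ℕ) : Decidable (Pq M r e n i j a) := by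
  unfold Pq; infer_instance

def Phi (M r e n : ℕ) : Finset (ℕ × ℕ × ℕ) :=
  ((Finset.range (2*n)) ×ˢ (Finset.range (2*n)) ×ˢ (Finset.range (2*n))).filter
    (fun x => Pq M r e n x.1 x.2.1 x.2.2)

lemma mem_Phi {M r e n : ℕ} {x : ℕ × ℕ × ℕ} :
    x ∈ Phi M r e n ↔ (x.1 < 2*n ∧ x.2.1 < 2*n ∧ x.2.2 < 2*n) ∧ Pq M r e n x.1 x.2.1 x.2.2 := by
  unfold Phi
  rw [Finset.mem_filter, Finset.mem_product, Finset.mem_product]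
  simp only [Finset.mem_range, and_assoc]

section Classify

include hr hMr in
lemma zw_mem (n : ℕ) : zw n ∈ Ffin (ws M r e) n := by
  have hgs := gs_ge hr hMr (n+1)
  have hGst := Gs_succ (M := M) (r := r) (e := e) n
  set s := Gs M r e (n+1) - n with hs
  have hs1 : Gs M r e n < s := by omega
  have heq : zw n = win (ws M r e) s n := by
    unfold zw win
    rw [mapRange_eq_iff]
    intro k hk
    exact (ws_between hr hMr n (s + k) (by omega) (by omega)).symm
  rw [mem_Ffin, heq]
  exact ⟨by simp, isFactor_win _ (by omega) n⟩

include hr hMr in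
lemma onew_mem {n a : ℕ} (ha : a < n) : onew n a ∈ Ffin (ws M r e) n := by
  obtain ⟨t, rfl⟩ : ∃ t, n = t + 1 := ⟨n - 1, by omega⟩
  have hgs := gs_ge hr hMr (t+1)
  have hgs2 := gs_ge hr hMr (t+1+1)
  have hGst := Gs_succ (M := M) (r := r) (e := e) t
  have hGst2 := Gs_succ (M := M) (r := r) (e := e) (t+1)
  set s := Gs M r e (t+1) - a with hs
  have hs0 : Gs M r e t < s := by omega
  have hsa : s + a = Gs M r e (t+1) := by omega
  have heq : onew (t+1) a = win (ws M r e) s (t+1) := by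
    unfold onew win
    rw [mapRange_eq_iff]
    intro k hk
    rcases lt_trichotomy k a with h | h | h
    · rw [if_neg (by omega)]
      exact (ws_between hr hMr t (s + k) (by omega) (by omega)).symm
    · subst h
      rw [if_pos rfl]
      have : s + k = Gs M r e (t+1) := by omega
      rw [this, ws_G hr hMr (t+1) (by omega)]
    · rw [if_neg (by omega)]
      exact (ws_between hr hMr (t+1) (s + k) (by omega) (by omega)).symm
  rw [mem_Ffin, heq]
  exact ⟨by simp, isFactor_win _ (by omega) _⟩

include hr hMr in
lemma two_mem {n i j a : ℕ} (h : Pq M r e n i j a) :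
    win (ws M r e) (Gs M r e i - a) n ∈ Ffin (ws M r e) n := by
  obtain ⟨h1, h2, h3, h4, h5⟩ := h
  obtain ⟨t, rfl⟩ : ∃ t, i = t + 1 := ⟨i - 1, by omega⟩
  have hGst := Gs_succ (M := M) (r := r) (e := e) t
  rw [mem_Ffin]
  exact ⟨by simp, isFactor_win _ (s := Gs M r e (t+1) - a) (by omega) n⟩

include hr hMr in
lemma classify {n : ℕ} {u : List (Fin 2)} (hu : u ∈ Ffin (ws M r e) n) :
    u = zw n ∨ (∃ a, a < n ∧ u = onew n a) ∨
      ∃ x ∈ Phi M r e n, u = win (ws M r e) (Gs M r e x.1 - x.2.2) n := by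
  classical
  obtain ⟨hlen, hfac⟩ := mem_Ffin.mp hu
  obtain ⟨s, hs1, hwin⟩ := eq_win_of_factor hfac
  rw [hlen] at hwin
  by_cases hex : ∃ k, k < n ∧ ws M r e (s + k) = 1
  · right
    set a := Nat.find hex with hadef
    obtain ⟨han, hwa⟩ := Nat.find_spec hex
    have hamin : ∀ k, k < a → ¬(k < n ∧ ws M r e (s+k) = 1) := fun k hk => Nat.find_min hex hk
    set K := Nat.findGreatest (fun k => ws M r e (s + k) = 1) (n-1) with hKdef
    have hKspec : ws M r e (s + K) = 1 :=
      Nat.findGreatest_spec (P := fun k => ws M r e (s + k) = 1) (m := a) (n := n - 1)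
        (by omega) hwa
    have hKle : K ≤ n - 1 := Nat.findGreatest_le (n-1)
    have hKmax : ∀ k, K < k → k ≤ n - 1 → ¬ ws M r e (s + k) = 1 :=
      fun k h1 h2 => Nat.findGreatest_is_greatest h1 h2
    have haK : a ≤ K := Nat.le_findGreatest (by omega) hwa
    obtain ⟨i, hi1, hGi⟩ := (ws_iff _).mp hwa
    obtain ⟨j, hj1, hGj⟩ := (ws_iff _).mp hKspec
    have hij : i ≤ j := (Gs_mono hr hMr).le_iff_le.mp (by omega)
    obtain ⟨t, rfl⟩ : ∃ t, i = t + 1 := ⟨i - 1, by omega⟩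
    have hGst := Gs_succ (M := M) (r := r) (e := e) t
    have hgp1 : 1 ≤ gs M r e (t+1) := gs_pos hr hMr (t+1) (by omega)
    have hts : Gs M r e t < s := by
      by_contra hcon
      push_neg at hcon
      rcases Nat.eq_zero_or_pos t with rfl | htpos
      · rw [Gs_zero] at hcon; omega
      · have hk : Gs M r e t - s < a := by omega
        have hw1 : ws M r e (s + (Gs M r e t - s)) = 1 := by
          have hh : s + (Gs M r e t - s) = Gs M r e t := by omega
          rw [hh]; exact ws_G hr hMr t htpos
        exact (hamin _ hk) ⟨by omega, hw1⟩
    rcases eq_or_lt_of_le hij with rfl | hij'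
    · left
      refine ⟨a, han, ?_⟩
      rw [hwin]
      show (List.range n).map (fun k => ws M r e (s + k)) =
        (List.range n).map (fun k => if k = a then 1 else 0)
      rw [mapRange_eq_iff]
      intro k hk
      by_cases hka : k = a
      · subst hka; rw [if_pos rfl]; exact hwa
      · rw [if_neg hka]
        apply fin2_eq_zero
        intro hwk
        have h1 : a ≤ k := by
          by_contra h2; push_neg at h2; exact (hamin k h2) ⟨hk, hwk⟩
        have h2 : k ≤ K := by
          by_contra h3; push_neg at h3
          exact (hKmax k h3 (by omega)) hwk
        obtain ⟨t', ht1, hGt'⟩ := (ws_iff _).mp hwk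
        have : t' = t + 1 := (Gs_mono hr hMr).injective (by omega)
        omega
    · right
      have hGjlt : Gs M r e (t+1) < Gs M r e j := Gs_mono hr hMr hij'
      have hPq : Pq M r e n (t+1) j a := by
        refine ⟨by omega, hij', by omega, by omega, ?_⟩
        by_contra hcon
        push_neg at hcon
        have hGj1 : Gs M r e (j+1) < s + n := by omega
        have hj2 : Gs M r e j < Gs M r e (j+1) := Gs_mono hr hMr (by omega)
        have hw1 : ws M r e (s + (Gs M r e (j+1) - s)) = 1 := by
          have hh : s + (Gs M r e (j+1) - s) = Gs M r e (j+1) := by omega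
          rw [hh]; exact ws_G hr hMr (j+1) (by omega)
        exact (hKmax _ (by omega) (by omega)) hw1
      have hGs2 := Gs_succ (M := M) (r := r) (e := e) (t+1)
      have hGs2j : Gs M r e (t+1+1) ≤ Gs M r e j := (Gs_mono hr hMr).monotone hij'
      have hgsge2 : t+1+1 ≤ gs M r e (t+1+1) := gs_ge hr hMr (t+1+1)
      have htn : t + 1 < n := by omega
      have hjd := Gs_diff hr hMr (j - (t+1)) (t+1)
      rw [show t + 1 + (j - (t+1)) = j by omega] at hjd
      have hjn : j < 2*n := by omega
      refine ⟨(t+1, j, a), ?_, ?_⟩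
      · rw [mem_Phi]
        refine ⟨⟨?_, ?_, ?_⟩, ?_⟩
        · show t + 1 < 2*n; omega
        · show j < 2*n; omega
        · show a < 2*n; omega
        · show Pq M r e n (t+1) j a; exact hPq
      · rw [hwin]
        have : Gs M r e (t+1) - a = s := by omega
        rw [this]
  · left
    rw [hwin]
    show (List.range n).map (fun k => ws M r e (s + k)) =
      (List.range n).map (fun _ => 0)
    rw [mapRange_eq_iff]
    intro k hk
    apply fin2_eq_zero
    intro hwk
    exact hex ⟨k, hk, hwk⟩

end Classify


lemma win_eq_iff {w : ℕ → Fin 2} {s s' n : ℕ} :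
    win w s n = win w s' n ↔ ∀ k, k < n → w (s + k) = w (s' + k) := by
  unfold win
  exact mapRange_eq_iff

section Count

include hr hMr in
lemma Pq_facts {n t j a : ℕ} (h : Pq M r e n (t+1) j a) :
    Gs M r e t < Gs M r e (t+1) - a ∧
    (Gs M r e (t+1) - a) + a = Gs M r e (t+1) ∧
    a + gs M r e (t+1+1) + 1 ≤ n ∧
    (Gs M r e (t+1) - a) + (a + gs M r e (t+1+1)) = Gs M r e (t+1+1) := by
  obtain ⟨h1, h2, h3, h4, h5⟩ := h
  have hGst := Gs_succ (M := M) (r := r) (e := e) t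
  have hGst2 := Gs_succ (M := M) (r := r) (e := e) (t+1)
  have hj2 : Gs M r e (t+1+1) ≤ Gs M r e j := (Gs_mono hr hMr).monotone h2
  exact ⟨by omega, by omega, by omega, by omega⟩

include hr hMr in
lemma Pq_entry1 {n t j a : ℕ} (h : Pq M r e n (t+1) j a) :
    ws M r e ((Gs M r e (t+1) - a) + a) = 1 := by
  obtain ⟨f1, f2, f3, f4⟩ := Pq_facts hr hMr h
  rw [f2]
  exact ws_G hr hMr (t+1) (by omega)

include hr hMr in
lemma Pq_entry0 {n t j a : ℕ} (h : Pq M r e n (t+1) j a) :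
    ∀ k, k < a → ws M r e ((Gs M r e (t+1) - a) + k) = 0 := by
  obtain ⟨f1, f2, f3, f4⟩ := Pq_facts hr hMr h
  intro k hk
  exact ws_between hr hMr t _ (by omega) (by omega)

include hr hMr in
lemma Pq_entry2 {n t j a : ℕ} (h : Pq M r e n (t+1) j a) :
    ws M r e ((Gs M r e (t+1) - a) + (a + gs M r e (t+1+1))) = 1 := by
  obtain ⟨f1, f2, f3, f4⟩ := Pq_facts hr hMr h
  rw [f4]
  exact ws_G hr hMr (t+1+1) (by omega)

include hr hMr in
lemma Pq_entry0' {n t j a : ℕ} (h : Pq M r e n (t+1) j a) :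
    ∀ k, a < k → k < a + gs M r e (t+1+1) → ws M r e ((Gs M r e (t+1) - a) + k) = 0 := by
  obtain ⟨f1, f2, f3, f4⟩ := Pq_facts hr hMr h
  intro k hk1 hk2
  exact ws_between hr hMr (t+1) _ (by omega) (by omega)

include hr hMr in
lemma win_injOn {n : ℕ} : ∀ x ∈ Phi M r e n, ∀ y ∈ Phi M r e n,
    win (ws M r e) (Gs M r e x.1 - x.2.2) n = win (ws M r e) (Gs M r e y.1 - y.2.2) n →
      x = y := by
  rintro ⟨i, j, a⟩ hx ⟨i', j', a'⟩ hy hxy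
  obtain ⟨-, hPx⟩ := mem_Phi.mp hx
  obtain ⟨-, hPy⟩ := mem_Phi.mp hy
  obtain ⟨t, rfl⟩ : ∃ t, i = t + 1 := ⟨i - 1, by have := hPx.1; omega⟩
  obtain ⟨t', rfl⟩ : ∃ t', i' = t' + 1 := ⟨i' - 1, by have := hPy.1; omega⟩
  simp only at hxy hPx hPy
  have H := win_eq_iff.mp hxy
  obtain ⟨f1, f2, f3, f4⟩ := Pq_facts hr hMr hPx
  obtain ⟨f1', f2', f3', f4'⟩ := Pq_facts hr hMr hPy
  have hgp : 1 ≤ gs M r e (t+1+1) := gs_pos hr hMr _ (by omega)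
  have hgp' : 1 ≤ gs M r e (t'+1+1) := gs_pos hr hMr _ (by omega)
  have haa : a = a' := by
    by_contra hne
    rcases Nat.lt_or_ge a a' with hlt | hge
    · have h1 := Pq_entry1 hr hMr hPx
      have h0 := Pq_entry0 hr hMr hPy a hlt
      have hH := H a (by omega)
      rw [h1, h0] at hH
      exact absurd hH (by decide)
    · have hlt : a' < a := by omega
      have h1 := Pq_entry1 hr hMr hPy
      have h0 := Pq_entry0 hr hMr hPx a' hlt
      have hH := H a' (by omega)
      rw [h1, h0] at hH
      exact absurd hH (by decide)
  subst haa
  have htt : t = t' := by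
    by_contra hne
    have hgne : gs M r e (t+1+1) ≠ gs M r e (t'+1+1) := by
      intro hgg
      have := gs_inj hr hMr (show 1 ≤ t+1+1 by omega) (show 1 ≤ t'+1+1 by omega) hgg
      omega
    rcases Nat.lt_or_ge (gs M r e (t+1+1)) (gs M r e (t'+1+1)) with hlt | hge
    · have h1 := Pq_entry2 hr hMr hPx
      have h0 := Pq_entry0' hr hMr hPy (a + gs M r e (t+1+1)) (by omega) (by omega)
      have hH := H (a + gs M r e (t+1+1)) (by omega)
      rw [h1, h0] at hH
      exact absurd hH (by decide)
    · have hlt : gs M r e (t'+1+1) < gs M r e (t+1+1) := by omega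
      have h1 := Pq_entry2 hr hMr hPy
      have h0 := Pq_entry0' hr hMr hPx (a + gs M r e (t'+1+1)) (by omega) (by omega)
      have hH := H (a + gs M r e (t'+1+1)) (by omega)
      rw [h1, h0] at hH
      exact absurd hH (by decide)
  subst htt
  have hjj : j = j' := by
    obtain ⟨h1, h2, h3, h4, h5⟩ := hPx
    obtain ⟨h1', h2', h3', h4', h5'⟩ := hPy
    have hj1 : Gs M r e j < Gs M r e (j'+1) := by omega
    have hj2 : Gs M r e j' < Gs M r e (j+1) := by omega
    have := (Gs_mono hr hMr).lt_iff_lt.mp hj1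
    have := (Gs_mono hr hMr).lt_iff_lt.mp hj2
    omega
  subst hjj
  rfl

include hr hMr in
lemma card_Ffin (n : ℕ) (hn : 1 ≤ n) :
    (Ffin (ws M r e) n).card = 1 + n + (Phi M r e n).card := by
  classical
  have honew_inj : Set.InjOn (onew n) (Finset.range n) := by
    intro a1 h1 a2 h2 h
    unfold onew at h
    rw [mapRange_eq_iff] at h
    by_contra hne
    have hh := h a1 (by simpa using h1)
    rw [if_pos rfl, if_neg hne] at hh
    exact absurd hh (by decide)
  have hwin_inj : Set.InjOn (fun x : ℕ × ℕ × ℕ => win (ws M r e) (Gs M r e x.1 - x.2.2) n)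
      (Phi M r e n) := by
    intro x hx y hy h
    exact win_injOn hr hMr x (by simpa using hx) y (by simpa using hy) h
  have hzw_notmem : zw n ∉ (Finset.range n).image (onew n) ∪
      (Phi M r e n).image (fun x => win (ws M r e) (Gs M r e x.1 - x.2.2) n) := by
    intro h
    rcases Finset.mem_union.mp h with h | h
    · obtain ⟨a, ha, heq⟩ := Finset.mem_image.mp h
      unfold onew zw at heq
      rw [mapRange_eq_iff] at heq
      have hh := heq a (by simpa using ha)
      rw [if_pos rfl] at hh
      exact absurd hh (by decide)
    · obtain ⟨x, hx, heq⟩ := Finset.mem_image.mp h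
      obtain ⟨-, hPx⟩ := mem_Phi.mp hx
      obtain ⟨t, ht⟩ : ∃ t, x.1 = t + 1 := ⟨x.1 - 1, by have := hPx.1; omega⟩
      rw [ht] at hPx heq
      obtain ⟨f1, f2, f3, f4⟩ := Pq_facts hr hMr hPx
      have h1 := Pq_entry1 hr hMr hPx
      unfold zw at heq
      unfold win at heq
      rw [mapRange_eq_iff] at heq
      have hh := heq x.2.2 (by omega)
      rw [h1] at hh
      exact absurd hh (by decide)
  have hdisj : Disjoint ((Finset.range n).image (onew n))
      ((Phi M r e n).image (fun x => win (ws M r e) (Gs M r e x.1 - x.2.2) n)) := by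
    rw [Finset.disjoint_left]
    intro u hu hu'
    obtain ⟨a1, ha1, heq1⟩ := Finset.mem_image.mp hu
    obtain ⟨x, hx, heq2⟩ := Finset.mem_image.mp hu'
    obtain ⟨-, hPx⟩ := mem_Phi.mp hx
    obtain ⟨t, ht⟩ : ∃ t, x.1 = t + 1 := ⟨x.1 - 1, by have := hPx.1; omega⟩
    rw [ht] at hPx heq2
    obtain ⟨f1, f2, f3, f4⟩ := Pq_facts hr hMr hPx
    have hgp : 1 ≤ gs M r e (t+1+1) := gs_pos hr hMr _ (by omega)
    have h1 := Pq_entry1 hr hMr hPx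
    have h2 := Pq_entry2 hr hMr hPx
    have heq : onew n a1 = win (ws M r e) (Gs M r e (t+1) - x.2.2) n := by
      rw [heq1, ← heq2]
    unfold onew win at heq
    rw [mapRange_eq_iff] at heq
    have hha := heq x.2.2 (by omega)
    rw [h1] at hha
    have ha1eq : x.2.2 = a1 := by
      by_contra hne; rw [if_neg hne] at hha; exact absurd hha (by decide)
    have hhb := heq (x.2.2 + gs M r e (t+1+1)) (by omega)
    rw [show x.2.2 + gs M r e (t+1+1) = x.2.2 + (x.2.2 + gs M r e (t+1+1)) - x.2.2 by omega] at hhb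
    rw [show Gs M r e (t+1) - x.2.2 + (x.2.2 + (x.2.2 + gs M r e (t+1+1)) - x.2.2)
        = Gs M r e (t+1) - x.2.2 + (x.2.2 + gs M r e (t+1+1)) by omega] at hhb
    rw [h2] at hhb
    have : x.2.2 + (x.2.2 + gs M r e (t+1+1)) - x.2.2 = a1 := by
      by_contra hne; rw [if_neg hne] at hhb; exact absurd hhb (by decide)
    omega
  have hset : Ffin (ws M r e) n =
      insert (zw n) ((Finset.range n).image (onew n) ∪
        (Phi M r e n).image (fun x => win (ws M r e) (Gs M r e x.1 - x.2.2) n)) := by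
    apply Finset.Subset.antisymm
    · intro u hu
      rcases classify hr hMr hu with h | ⟨a, ha, h⟩ | ⟨x, hx, h⟩
      · subst h; exact Finset.mem_insert_self _ _
      · subst h
        exact Finset.mem_insert_of_mem (Finset.mem_union_left _
          (Finset.mem_image.mpr ⟨a, Finset.mem_range.mpr ha, rfl⟩))
      · subst h
        exact Finset.mem_insert_of_mem (Finset.mem_union_right _
          (Finset.mem_image.mpr ⟨x, hx, rfl⟩))
    · intro u hu
      rcases Finset.mem_insert.mp hu with rfl | hu
      · exact zw_mem hr hMr n
      rcases Finset.mem_union.mp hu with hu | hu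
      · obtain ⟨a, ha, rfl⟩ := Finset.mem_image.mp hu
        exact onew_mem hr hMr (Finset.mem_range.mp ha)
      · obtain ⟨x, hx, rfl⟩ := Finset.mem_image.mp hu
        exact two_mem hr hMr (mem_Phi.mp hx).2
  rw [hset, Finset.card_insert_of_notMem hzw_notmem, Finset.card_union_of_disjoint hdisj,
    Finset.card_image_of_injOn honew_inj, Finset.card_image_of_injOn hwin_inj,
    Finset.card_range]
  ring

end Count


def Qq (M r e n i a : ℕ) : Prop :=
  1 ≤ i ∧ a + 1 ≤ gs M r e i ∧ gs M r e (i+1) + a + 1 ≤ n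

instance (M r e n i a : ℕ) : Decidable (Qq M r e n i a) := by
  unfold Qq; infer_instance

def Psi (M r e n : ℕ) : Finset (ℕ × ℕ) :=
  ((Finset.range n) ×ˢ (Finset.range n)).filter (fun x => Qq M r e n x.1 x.2)

lemma mem_Psi {M r e n : ℕ} {x : ℕ × ℕ} :
    x ∈ Psi M r e n ↔ (x.1 < n ∧ x.2 < n) ∧ Qq M r e n x.1 x.2 := by
  unfold Psi
  rw [Finset.mem_filter, Finset.mem_product]
  simp only [Finset.mem_range]

section Bij

include hr hMr in
lemma Pq_to_Qq {n i j a : ℕ} (h : Pq M r e n i j a) :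
    (i < n ∧ a < n) ∧ Qq M r e n i a := by
  obtain ⟨t, rfl⟩ : ∃ t, i = t + 1 := ⟨i - 1, by have := h.1; omega⟩
  obtain ⟨f1, f2, f3, f4⟩ := Pq_facts hr hMr h
  have hgge : t+1+1 ≤ gs M r e (t+1+1) := gs_ge hr hMr _
  exact ⟨⟨by omega, by omega⟩, by omega, h.2.2.1, by omega⟩

include hr hMr in
lemma j_uniq {n i j j' a : ℕ} (h : Pq M r e n i j a) (h' : Pq M r e n i j' a) : j = j' := by
  obtain ⟨h1, h2, h3, h4, h5⟩ := h
  obtain ⟨h1', h2', h3', h4', h5'⟩ := h'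
  have hj1 : Gs M r e j < Gs M r e (j'+1) := by omega
  have hj2 : Gs M r e j' < Gs M r e (j+1) := by omega
  have := (Gs_mono hr hMr).lt_iff_lt.mp hj1
  have := (Gs_mono hr hMr).lt_iff_lt.mp hj2
  omega

open Classical in
noncomputable def jof (M r e n i a : ℕ) : ℕ :=
  Nat.findGreatest (fun t => Gs M r e t + a + 1 ≤ n + Gs M r e i) (n + Gs M r e i)

include hr hMr in
lemma jof_spec {n i a : ℕ} (h : Qq M r e n i a) : Pq M r e n i (jof M r e n i a) a := by
  classical
  obtain ⟨h1, h2, h3⟩ := h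
  have hGs := Gs_succ (M := M) (r := r) (e := e) i
  have hP1 : Gs M r e (i+1) + a + 1 ≤ n + Gs M r e i := by omega
  have hb1 : i + 1 ≤ Gs M r e (i+1) := Gs_ge hr hMr (i+1)
  have hble : i + 1 ≤ n + Gs M r e i := by omega
  have hspec : Gs M r e (jof M r e n i a) + a + 1 ≤ n + Gs M r e i := by
    unfold jof
    exact Nat.findGreatest_spec (P := fun t => Gs M r e t + a + 1 ≤ n + Gs M r e i)
      (n := n + Gs M r e i) (m := i+1) hble hP1
  have hlow : i + 1 ≤ jof M r e n i a := by
    unfold jof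
    exact Nat.le_findGreatest hble hP1
  have hup : n + Gs M r e i ≤ Gs M r e (jof M r e n i a + 1) + a := by
    by_contra hcon
    push_neg at hcon
    have hprop : Gs M r e (jof M r e n i a + 1) + a + 1 ≤ n + Gs M r e i := by omega
    have hbnd : jof M r e n i a + 1 ≤ n + Gs M r e i := by
      have := Gs_ge hr hMr (jof M r e n i a + 1)
      omega
    have := Nat.findGreatest_is_greatest (P := fun t => Gs M r e t + a + 1 ≤ n + Gs M r e i)
      (n := n + Gs M r e i) (k := jof M r e n i a + 1) (by unfold jof; omega) hbnd
    exact this hprop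
  exact ⟨h1, by omega, h2, hspec, hup⟩

include hr hMr in
lemma Pq_j_bound {n i j a : ℕ} (h : Pq M r e n i j a) : j < 2*n := by
  obtain ⟨⟨hin, han⟩, -⟩ := Pq_to_Qq hr hMr h
  obtain ⟨h1, h2, h3, h4, h5⟩ := h
  have hjd := Gs_diff hr hMr (j - i) i
  rw [show i + (j - i) = j by omega] at hjd
  omega

include hr hMr in
lemma card_Phi_Psi (n : ℕ) : (Phi M r e n).card = (Psi M r e n).card := by
  classical
  apply Finset.card_bij' (i := fun (x : ℕ × ℕ × ℕ) _ => (x.1, x.2.2))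
    (j := fun (y : ℕ × ℕ) _ => (y.1, jof M r e n y.1 y.2, y.2))
  · intro x hx
    obtain ⟨-, hPx⟩ := mem_Phi.mp hx
    rw [mem_Psi]
    exact Pq_to_Qq hr hMr hPx
  · intro y hy
    obtain ⟨⟨hy1, hy2⟩, hQ⟩ := mem_Psi.mp hy
    have hP := jof_spec hr hMr hQ
    rw [mem_Phi]
    refine ⟨⟨?_, ?_, ?_⟩, hP⟩
    · show y.1 < 2*n; omega
    · show jof M r e n y.1 y.2 < 2*n; exact Pq_j_bound hr hMr hP
    · show y.2 < 2*n; omega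
  · intro x hx
    obtain ⟨-, hPx⟩ := mem_Phi.mp hx
    have hQ := (Pq_to_Qq hr hMr hPx).2
    have hP' := jof_spec hr hMr hQ
    have := j_uniq hr hMr hP' hPx
    show (x.1, jof M r e n x.1 x.2.2, x.2.2) = x
    rw [this]
  · intro y hy
    rfl

end Bij

def Sfun (M r e n : ℕ) : ℕ :=
  ∑ i ∈ Finset.range (n+1), min (gs M r e i) (n - gs M r e (i+1))

section CardPsi

include hr hMr in
lemma fiber_card (n i : ℕ) :
    ((Psi M r e n).filter (fun x => x.1 = i)).card = min (gs M r e i) (n - gs M r e (i+1)) := by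
  classical
  rcases Nat.eq_zero_or_pos i with rfl | hipos
  · have hempty : (Psi M r e n).filter (fun x => x.1 = 0) = ∅ := by
      rw [Finset.eq_empty_iff_forall_notMem]
      intro x hx
      obtain ⟨hmem, hx1⟩ := Finset.mem_filter.mp hx
      obtain ⟨-, hQ⟩ := mem_Psi.mp hmem
      rw [hx1] at hQ
      exact absurd hQ.1 (by omega)
    rw [hempty]
    simp [gs_zero]
  · have hgge : i + 1 ≤ gs M r e (i+1) := gs_ge hr hMr (i+1)
    have him : (Psi M r e n).filter (fun x => x.1 = i) =
        (Finset.range (min (gs M r e i) (n - gs M r e (i+1)))).image (fun a => (i, a)) := by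
      apply Finset.ext
      intro x
      rw [Finset.mem_filter, mem_Psi]
      simp only [Finset.mem_image, Finset.mem_range]
      constructor
      · rintro ⟨⟨⟨hx1, hx2⟩, hQ1, hQ2, hQ3⟩, hfx⟩
        rw [hfx] at hQ2 hQ3
        refine ⟨x.2, by omega, ?_⟩
        rw [← hfx]
      · rintro ⟨a, ha, heq⟩
        have hx1 : x.1 = i := by rw [← heq]
        have hx2 : x.2 = a := by rw [← heq]
        rw [hx1, hx2]
        exact ⟨⟨⟨by omega, by omega⟩, hipos, by omega, by omega⟩, rfl⟩
    rw [him, Finset.card_image_of_injOn (fun a _ b _ hab => by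
      simpa using congrArg Prod.snd hab), Finset.card_range]

include hr hMr in
lemma card_Psi (n : ℕ) : (Psi M r e n).card = Sfun M r e n := by
  classical
  rw [Finset.card_eq_sum_card_fiberwise (f := Prod.fst) (t := Finset.range (n+1))
    (fun x hx => by
      obtain ⟨⟨h1, h2⟩, -⟩ := mem_Psi.mp hx
      exact Finset.mem_range.mpr (by omega))]
  unfold Sfun
  apply Finset.sum_congr rfl
  intro i _
  exact fiber_card hr hMr n i

end CardPsi


def Az (M r e x : ℕ) : ℤ := ∑ i ∈ Finset.range (x+1), (gs M r e i : ℤ)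

def Ez (M r e m : ℕ) : ℤ := Az M r e (m-(e+1)) + Az M r e (m-(e+1)+1) - Az M r e (m+1)

section Eval

lemma Az_succ (x : ℕ) : Az M r e (x+1) = Az M r e x + gs M r e (x+1) := by
  unfold Az; rw [Finset.sum_range_succ]

lemma gs_rec {k : ℕ} (hk : r ≤ k) :
    gs M r e (k+e+2) = gs M r e k + gs M r e (k+1) := by
  have h := gs_rec' (M := M) (r := r) (e := e) (i := k+e+2) (by omega)
  rw [show k+e+2-e-2 = k by omega] at h
  exact h

include hr hMr in
lemma Sfun_eval {n m : ℕ} (hm : r + e + 2 ≤ m) (h1 : gs M r e (m+1) < n)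
    (h2 : n ≤ gs M r e (m+1+1)) :
    (Sfun M r e n : ℤ) = (e+1) * n + Ez M r e m := by
  obtain ⟨x, rfl⟩ : ∃ x, m = x + e + 1 := ⟨m - e - 1, by omega⟩
  have hxr : r + 1 ≤ x := by omega
  rw [show x+e+1+1 = x+e+2 by omega] at h1 h2
  rw [show x+e+2+1 = x+e+3 by omega] at h2
  have hnx : x + e + 2 < n := by have := gs_ge hr hMr (x+e+2); omega
  have hEz : Ez M r e (x+e+1) = Az M r e x + Az M r e (x+1) - Az M r e (x+e+2) := by
    unfold Ez
    rw [show x+e+1-(e+1) = x by omega, show x+e+1+1 = x+e+2 by omega]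
  have key : Sfun M r e n = (∑ i ∈ Finset.range (x+1), gs M r e i) +
      (∑ i ∈ Finset.Ico (x+1) (x+e+2), (n - gs M r e (i+1))) := by
    unfold Sfun
    rw [← Finset.sum_range_add_sum_Ico _ (show x+1 ≤ n+1 by omega),
        ← Finset.sum_Ico_consecutive _ (show x+1 ≤ x+e+2 by omega) (show x+e+2 ≤ n+1 by omega)]
    have hz : ∑ i ∈ Finset.Ico (x+e+2) (n+1), min (gs M r e i) (n - gs M r e (i+1)) = 0 := by
      apply Finset.sum_eq_zero
      intro i hi
      obtain ⟨hi1, hi2⟩ := Finset.mem_Ico.mp hi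
      have hmn : gs M r e (x+e+3) ≤ gs M r e (i+1) := gs_mono hr hMr (by omega) (by omega)
      have hz0 : n - gs M r e (i+1) = 0 := by omega
      omega
    have hsat : ∀ i ∈ Finset.range (x+1), min (gs M r e i) (n - gs M r e (i+1)) = gs M r e i := by
      intro i hi
      have hi' : i ≤ x := by have := Finset.mem_range.mp hi; omega
      have hkey : gs M r e i + gs M r e (i+1) < n := by
        rcases Nat.eq_zero_or_pos i with rfl | hip
        · rw [gs_zero]
          have : gs M r e (0+1) ≤ gs M r e (x+e+2) := gs_mono hr hMr (by omega) (by omega)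
          omega
        · rcases Nat.lt_or_ge i r with hir | hir
          · have ha1 : gs M r e i ≤ gs M r e r := gs_mono hr hMr hip (by omega)
            have ha2 : gs M r e (i+1) ≤ gs M r e (r+1) := gs_mono hr hMr (by omega) (by omega)
            have ha3 := gs_rec (M := M) (e := e) (le_refl r)
            have ha4 : gs M r e (r+e+2) ≤ gs M r e (x+e+2) := gs_mono hr hMr (by omega) (by omega)
            omega
          · have ha3 := gs_rec (M := M) (e := e) hir
            have ha4 : gs M r e (i+e+2) ≤ gs M r e (x+e+2) := gs_mono hr hMr (by omega) (by omega)
            omega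
      omega
    have hunsat : ∀ i ∈ Finset.Ico (x+1) (x+e+2),
        min (gs M r e i) (n - gs M r e (i+1)) = n - gs M r e (i+1) := by
      intro i hi
      obtain ⟨hi1, hi2⟩ := Finset.mem_Ico.mp hi
      have ha3 := gs_rec (M := M) (e := e) (show r ≤ i by omega)
      have ha4 : gs M r e (x+e+3) ≤ gs M r e (i+e+2) := gs_mono hr hMr (by omega) (by omega)
      omega
    rw [Finset.sum_congr rfl hsat, Finset.sum_congr rfl hunsat, hz, add_zero]
  have hterm : ∀ i ∈ Finset.Ico (x+1) (x+e+2), gs M r e (i+1) ≤ n := by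
    intro i hi
    obtain ⟨hi1, hi2⟩ := Finset.mem_Ico.mp hi
    have : gs M r e (i+1) ≤ gs M r e (x+e+2) := gs_mono hr hMr (by omega) (by omega)
    omega
  have hc2 : ((∑ i ∈ Finset.Ico (x+1) (x+e+2), (n - gs M r e (i+1)) : ℕ) : ℤ)
      = ∑ i ∈ Finset.Ico (x+1) (x+e+2), ((n:ℤ) - gs M r e (i+1)) := by
    rw [Nat.cast_sum]
    apply Finset.sum_congr rfl
    intro i hi
    rw [Nat.cast_sub (hterm i hi)]
  have hc3 : ∑ i ∈ Finset.Ico (x+1) (x+e+2), ((n:ℤ) - gs M r e (i+1))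
      = (e+1) * n - ∑ i ∈ Finset.Ico (x+1) (x+e+2), (gs M r e (i+1) : ℤ) := by
    rw [Finset.sum_sub_distrib, Finset.sum_const, Nat.card_Ico,
      show x+e+2-(x+1) = e+1 by omega]
    push_cast
    ring
  have hc4 : ∑ i ∈ Finset.Ico (x+1) (x+e+2), (gs M r e (i+1) : ℤ)
      = ∑ i ∈ Finset.Ico (x+2) (x+e+3), (gs M r e i : ℤ) := by
    have h := Finset.sum_map (Finset.Ico (x+1) (x+e+2)) (addRightEmbedding 1)
      (fun i => (gs M r e i : ℤ))
    rw [Finset.map_add_right_Ico] at h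
    rw [show x+2 = x+1+1 by omega, show x+e+3 = x+e+2+1 by omega, h]
    apply Finset.sum_congr rfl
    intro i _
    first
    | rfl
    | simp [addRightEmbedding]
  have hc5 : ∑ i ∈ Finset.Ico (x+2) (x+e+3), (gs M r e i : ℤ)
      = Az M r e (x+e+2) - Az M r e (x+1) := by
    have hh := Finset.sum_range_add_sum_Ico (fun i => (gs M r e i : ℤ))
      (show x+2 ≤ x+e+3 by omega)
    unfold Az
    rw [show x+1+1 = x+2 by omega, show x+e+2+1 = x+e+3 by omega]
    linarith
  have hc1 : ((∑ i ∈ Finset.range (x+1), gs M r e i : ℕ) : ℤ) = Az M r e x := by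
    rw [Nat.cast_sum]; rfl
  rw [key, Nat.cast_add, hc1, hc2, hc3, hc4, hc5, hEz]
  ring

lemma Ez_const {m : ℕ} (hm : r + e + 1 ≤ m) : Ez M r e m = Ez M r e (r+e+1) := by
  induction m, hm using Nat.le_induction with
  | base => rfl
  | succ m hm ih =>
    rw [← ih]
    obtain ⟨x, rfl⟩ : ∃ x, m = x + e + 1 := ⟨m - e - 1, by omega⟩
    have hxr : r ≤ x := by omega
    unfold Ez
    rw [show x+e+1+1-(e+1) = x+1 by omega, show x+e+1-(e+1) = x by omega,
      show x+e+1+1+1 = x+e+3 by omega, show x+e+1+1 = x+e+2 by omega,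
      show x+1+1 = x+2 by omega]
    have hA1 : Az M r e (x+1) = Az M r e x + gs M r e (x+1) := Az_succ _
    have hA2 : Az M r e (x+2) = Az M r e (x+1) + gs M r e (x+2) := by
      rw [show x+2 = x+1+1 by omega]; exact Az_succ _
    have hA3 : Az M r e (x+e+3) = Az M r e (x+e+2) + gs M r e (x+e+3) := by
      rw [show x+e+3 = (x+e+2)+1 by omega]; exact Az_succ _
    have hrec : gs M r e (x+e+3) = gs M r e (x+1) + gs M r e (x+2) := by
      have h := gs_rec (M := M) (e := e) (show r ≤ x+1 by omega)
      rw [show x+1+e+2 = x+e+3 by omega, show x+1+1 = x+2 by omega] at h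
      exact h
    linarith

lemma Az_init {x : ℕ} (hx : x ≤ r + e + 1) :
    2 * Az M r e x = 2*(x:ℤ)*M + x*(x+1) := by
  induction x with
  | zero => unfold Az; simp [gs_zero]
  | succ x ih =>
    rw [Az_succ, gs_init (by omega) (by omega)]
    have hih := ih (by omega)
    push_cast
    push_cast at hih
    linear_combination hih

include hr in
lemma Ez_base : 2 * Ez M r e (r+e+1) =
    (2*(r:ℤ)*M + r*(r+1)) + (2*((r:ℤ)+1)*M + (r+1)*(r+2))
      - (2*((r:ℤ)+e+1)*M + (r+e+1)*(r+e+2)) - 2*(2*(M:ℤ) + 2*r + 1) := by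
  unfold Ez
  rw [show r+e+1-(e+1) = r by omega]
  have hA3 : Az M r e (r+e+2) = Az M r e (r+e+1) + gs M r e (r+e+2) := by
    rw [show r+e+2 = (r+e+1)+1 by omega]; exact Az_succ _
  have hrec : gs M r e (r+e+2) = gs M r e r + gs M r e (r+1) := gs_rec le_rfl
  rw [show r+e+1+1 = r+e+2 by omega, hA3, hrec, gs_init hr (by omega),
    gs_init (by omega) (by omega)]
  have h1 := Az_init (M := M) (r := r) (e := e) (x := r) (by omega)
  have h2 := Az_init (M := M) (r := r) (e := e) (x := r+1) (by omega)
  have h3 := Az_init (M := M) (r := r) (e := e) (x := r+e+1) (le_refl _)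
  push_cast at h1 h2 h3 ⊢
  linarith

include hr hMr in
lemma complexity_formula :
    ∀ n, gs M r e (r+e+3) < n →
      (complexity (ws M r e) n : ℤ) = ((e:ℤ)+2)*n + (1 + Ez M r e (r+e+1)) := by
  intro n hn
  classical
  have hge3 := gs_ge hr hMr (r+e+3)
  have hn1 : 1 ≤ n := by omega
  set F := Nat.findGreatest (fun t => gs M r e t < n) n with hF
  have hble : r+e+3 ≤ n := by omega
  have hFlow : r+e+3 ≤ F := Nat.le_findGreatest hble hn
  have hFspec : gs M r e F < n :=
    Nat.findGreatest_spec (P := fun t => gs M r e t < n) (n := n) hble hn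
  have hFmax : ¬ gs M r e (F+1) < n := by
    intro hcon
    by_cases hFn : F + 1 ≤ n
    · exact Nat.findGreatest_is_greatest (P := fun t => gs M r e t < n) (n := n)
        (k := F+1) (by rw [← hF]; omega) hFn hcon
    · have := gs_ge hr hMr (F+1); omega
  obtain ⟨m, hFm⟩ : ∃ m, F = m + 1 := ⟨F-1, by omega⟩
  rw [hFm] at hFspec hFmax hFlow
  have hm : r+e+2 ≤ m := by omega
  have h2 : n ≤ gs M r e (m+1+1) := by omega
  have hcard : (complexity (ws M r e) n : ℤ) = 1 + n + ((Sfun M r e n : ℕ) : ℤ) := by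
    rw [complexity_eq_card, card_Ffin hr hMr n hn1, card_Phi_Psi hr hMr n, card_Psi hr hMr n]
    push_cast; ring
  rw [hcard, Sfun_eval hr hMr hm hFspec h2, Ez_const (M := M) (show r+e+1 ≤ m by omega)]
  push_cast
  ring

end Eval

end GapWord

theorem stmt16 (a b : ℤ) :
    (∃ (w : ℕ → Fin 2) (G : ℕ → ℕ), OneDistrib w G ∧ GapIncreasing G ∧
      ∃ N : ℕ, ∀ n : ℕ, N ≤ n → (complexity w n : ℤ) = a * n + b) ↔ 2 ≤ a := by
  constructor
  · rintro ⟨w, G, hOD, hGI, N, hN⟩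
    exact GapWord.forward w G hOD hGI a b N hN
  · intro ha
    obtain ⟨e, hae⟩ : ∃ e : ℕ, a = (e:ℤ) + 2 := by
      refine ⟨(a-2).toNat, ?_⟩
      have := Int.toNat_of_nonneg (show (0:ℤ) ≤ a - 2 by omega)
      omega
    by_cases hc : -((e:ℤ)^2 + 3*e + 1) ≤ b - 1
    · set M := (b - 1 + (e:ℤ)^2 + 3*e + 1).toNat with hMdef
      have hM : (M:ℤ) = b - 1 + (e:ℤ)^2 + 3*e + 1 := Int.toNat_of_nonneg (by linarith)
      have hr : 1 ≤ e + 3 := by omega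
      have hMr : e + 1 ≤ M + (e + 3) := by omega
      refine ⟨GapWord.ws M (e+3) e, GapWord.Gs M (e+3) e, GapWord.oneDistrib_ws hr hMr,
        GapWord.gapIncreasing_ws hr hMr, GapWord.gs M (e+3) e (e+3+e+3) + 1, ?_⟩
      intro n hn
      rw [GapWord.complexity_formula hr hMr n (by omega)]
      have hEz : GapWord.Ez M (e+3) e (e+3+e+1) = b - 1 := by
        have h2 := GapWord.Ez_base (M := M) (r := e+3) (e := e) hr
        have h3 : (2:ℤ) * GapWord.Ez M (e+3) e (e+3+e+1) = 2*(b-1) := by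
          rw [h2, hM]; push_cast; ring
        linarith
      rw [hEz, hae]
      ring
    · set M := (-(b-1) - ((e:ℤ)^2 + 3*e + 2)).toNat with hMdef
      have hM : (M:ℤ) = -(b-1) - ((e:ℤ)^2 + 3*e + 2) := Int.toNat_of_nonneg (by linarith)
      have hr : 1 ≤ e + 1 := by omega
      have hMr : e + 1 ≤ M + (e + 1) := by omega
      refine ⟨GapWord.ws M (e+1) e, GapWord.Gs M (e+1) e, GapWord.oneDistrib_ws hr hMr,
        GapWord.gapIncreasing_ws hr hMr, GapWord.gs M (e+1) e (e+1+e+3) + 1, ?_⟩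
      intro n hn
      rw [GapWord.complexity_formula hr hMr n (by omega)]
      have hEz : GapWord.Ez M (e+1) e (e+1+e+1) = b - 1 := by
        have h2 := GapWord.Ez_base (M := M) (r := e+1) (e := e) hr
        have h3 : (2:ℤ) * GapWord.Ez M (e+1) e (e+1+e+1) = 2*(b-1) := by
          rw [h2, hM]; push_cast; ring
        linarith
      rw [hEz, hae]
      ring
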